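/- There exists a unique b* ∈ [b₀, f(b₀)] with f(b*) = b*, and b* = b₀ = f(b₀) if and only if ΔQ = u − l. -/

import Mathlib

open Real

/-- Normalisation constant of the bounded Laplace mechanism on `[l,u]`. -/
noncomputable def C (l u b q : ℝ) : ℝ :=
  1 - (1 / 2) * (Real.exp (-(q - l) / b) + Real.exp (-(u - q) / b))

/-- `ΔC(b) = C_{l+ΔQ}(b) / C_l(b)`. -/
noncomputable def deltaC (l u ΔQ b : ℝ) : ℝ := C l u b (l + ΔQ) / C l u b l

/-- The fixed point operator `f`. -/
noncomputable def fFix (l u ΔQ ε δ b : ℝ) : ℝ :=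
  ΔQ / (ε - Real.log (deltaC l u ΔQ b) - Real.log (1 - δ))

namespace BLMAux

/-- The ratio `ΔC` as a function of `t = 1/b`. -/
noncomputable def hAux (p q t : ℝ) : ℝ :=
  (2 - Real.exp (-(p*t)) - Real.exp (-(q*t))) / (1 - Real.exp (-((p+q)*t)))

lemma exp_lt_one' {x : ℝ} (hx : 0 < x) : Real.exp (-x) < 1 := by
  rw [Real.exp_lt_one_iff]; linarith

lemma denom_pos {p q t : ℝ} (hp : 0 < p) (hq : 0 ≤ q) (ht : 0 < t) :
    0 < 1 - Real.exp (-((p+q)*t)) := by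
  have := exp_lt_one' (x := (p+q)*t) (by positivity)
  linarith

lemma hAux_ge_one {p q t : ℝ} (hp : 0 < p) (hq : 0 ≤ q) (ht : 0 < t) :
    1 ≤ hAux p q t := by
  have hd := denom_pos hp hq ht
  rw [hAux, le_div_iff₀ hd, one_mul]
  have ha : Real.exp (-(p*t)) ≤ 1 := by
    rw [Real.exp_le_one_iff]; nlinarith
  have hc : Real.exp (-(q*t)) ≤ 1 := by
    rw [Real.exp_le_one_iff]; nlinarith
  have hs : Real.exp (-((p+q)*t)) = Real.exp (-(p*t)) * Real.exp (-(q*t)) := by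
    rw [← Real.exp_add]; ring_nf
  nlinarith [Real.exp_pos (-(p*t)), Real.exp_pos (-(q*t))]

lemma hAux_pos {p q t : ℝ} (hp : 0 < p) (hq : 0 ≤ q) (ht : 0 < t) :
    0 < hAux p q t := lt_of_lt_of_le one_pos (hAux_ge_one hp hq ht)

lemma hAux_gt_one {p q t : ℝ} (hp : 0 < p) (hq : 0 < q) (ht : 0 < t) :
    1 < hAux p q t := by
  have hd := denom_pos hp hq.le ht
  rw [hAux, lt_div_iff₀ hd, one_mul]
  have ha : Real.exp (-(p*t)) < 1 := exp_lt_one' (by positivity)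
  have hc : Real.exp (-(q*t)) < 1 := exp_lt_one' (by positivity)
  have hs : Real.exp (-((p+q)*t)) = Real.exp (-(p*t)) * Real.exp (-(q*t)) := by
    rw [← Real.exp_add]; ring_nf
  nlinarith [Real.exp_pos (-(p*t)), Real.exp_pos (-(q*t))]

lemma hAux_eq_one {p t : ℝ} (hp : 0 < p) (ht : 0 < t) :
    hAux p 0 t = 1 := by
  have ha : Real.exp (-(p*t)) < 1 := exp_lt_one' (by positivity)
  rw [hAux]
  simp only [zero_mul, neg_zero, Real.exp_zero, add_zero]
  rw [div_eq_one_iff_eq (by linarith)]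
  ring

lemma hAux_lt_exp {p q t : ℝ} (hp : 0 < p) (hq : 0 ≤ q) (ht : 0 < t) :
    hAux p q t < Real.exp (p*t) := by
  have hd := denom_pos hp hq ht
  rw [hAux, div_lt_iff₀ hd]
  have hs : Real.exp (-((p+q)*t)) = Real.exp (-(p*t)) * Real.exp (-(q*t)) := by
    rw [← Real.exp_add]; ring_nf
  have hEa : Real.exp (p*t) * Real.exp (-(p*t)) = 1 := by
    rw [← Real.exp_add]; ring_nf; exact Real.exp_zero
  have ha : Real.exp (-(p*t)) < 1 := exp_lt_one' (by positivity)
  have hc : Real.exp (-(q*t)) ≤ 1 := by rw [Real.exp_le_one_iff]; nlinarith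
  have hapos := Real.exp_pos (-(p*t))
  have hcpos := Real.exp_pos (-(q*t))
  have hE := Real.exp_pos (p*t)
  nlinarith [sq_nonneg (1 - Real.exp (-(p*t))), mul_pos hE hapos]


lemma hAux_hasDerivAt {p q t : ℝ} (hp : 0 < p) (hq : 0 ≤ q) (ht : 0 < t) :
    HasDerivAt (hAux p q)
      ((p * Real.exp (-(p*t)) * (1 - Real.exp (-(q*t)))^2 +
        q * Real.exp (-(q*t)) * (1 - Real.exp (-(p*t)))^2) /
        (1 - Real.exp (-(p*t)) * Real.exp (-(q*t)))^2) t := by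
  have hexp : ∀ c : ℝ, HasDerivAt (fun x : ℝ => Real.exp (-(c*x))) (-c * Real.exp (-(c*t))) t := by
    intro c
    have h := (((hasDerivAt_id t).const_mul c).neg).exp
    simp only [id_eq] at h
    refine h.congr_deriv ?_; simp only [Pi.neg_apply]; ring
  have hn : HasDerivAt (fun x : ℝ => 2 - Real.exp (-(p*x)) - Real.exp (-(q*x)))
      (p * Real.exp (-(p*t)) + q * Real.exp (-(q*t))) t := by
    have h := ((hasDerivAt_const t (2:ℝ)).sub (hexp p)).sub (hexp q)
    refine h.congr_deriv ?_; ring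
  have hdd : HasDerivAt (fun x : ℝ => 1 - Real.exp (-((p+q)*x)))
      ((p+q) * Real.exp (-((p+q)*t))) t := by
    have h := (hasDerivAt_const t (1:ℝ)).sub (hexp (p+q))
    refine h.congr_deriv ?_; ring
  have hd := denom_pos hp hq ht
  have hdiv := hn.div hdd (ne_of_gt hd)
  have hfun : hAux p q = fun x : ℝ =>
      (2 - Real.exp (-(p*x)) - Real.exp (-(q*x))) / (1 - Real.exp (-((p+q)*x))) := rfl
  rw [hfun]
  refine hdiv.congr_deriv ?_
  have hs : Real.exp (-((p+q)*t)) = Real.exp (-(p*t)) * Real.exp (-(q*t)) := by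
    rw [← Real.exp_add]; ring_nf
  rw [hs]
  ring

lemma hAux_monotoneOn {p q : ℝ} (hp : 0 < p) (hq : 0 ≤ q) :
    MonotoneOn (hAux p q) (Set.Ioi 0) := by
  apply monotoneOn_of_deriv_nonneg (convex_Ioi 0)
  · exact fun t ht => ((hAux_hasDerivAt hp hq ht).continuousAt).continuousWithinAt
  · rw [interior_Ioi]
    exact fun t ht => ((hAux_hasDerivAt hp hq ht).differentiableAt).differentiableWithinAt
  · rw [interior_Ioi]
    intro t ht
    rw [(hAux_hasDerivAt hp hq ht).deriv]
    apply div_nonneg _ (sq_nonneg _)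
    have h1 := sq_nonneg (1 - Real.exp (-(q*t)))
    have h2 := sq_nonneg (1 - Real.exp (-(p*t)))
    have h3 := Real.exp_pos (-(p*t))
    have h4 := Real.exp_pos (-(q*t))
    positivity


lemma deltaC_eq {l u ΔQ b : ℝ} (hlu : l < u) (hΔQ : 0 < ΔQ) (hΔQu : ΔQ ≤ u - l) (hb : 0 < b) :
    deltaC l u ΔQ b = hAux ΔQ (u - l - ΔQ) (1/b) := by
  have hq : 0 ≤ u - l - ΔQ := by linarith
  have e1 : -((l + ΔQ) - l)/b = -(ΔQ * (1/b)) := by ring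
  have e2 : -(u - (l + ΔQ))/b = -((u - l - ΔQ) * (1/b)) := by ring
  have e3 : -(l - l)/b = 0 := by ring
  have e4 : -(u - l)/b = -((ΔQ + (u - l - ΔQ)) * (1/b)) := by ring
  have hd := denom_pos hΔQ hq (by positivity : (0:ℝ) < 1/b)
  rw [deltaC, C, C, hAux, e1, e2, e3, e4, Real.exp_zero]
  rw [div_eq_div_iff (by linarith) (by linarith)]
  ring

end BLMAux

open BLMAux in
theorem fixed_point_exists_unique (l u ΔQ ε δ : ℝ) (hlu : l < u)
    (hΔQ : 0 < ΔQ) (hΔQu : ΔQ ≤ u - l) (hε : 0 ≤ ε) (hδ0 : 0 ≤ δ) (hδ1 : δ < 1)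
    (hne : ¬(ε = 0 ∧ δ = 0)) :
    (∃! bs : ℝ,
        bs ∈ Set.Icc (ΔQ / (ε - Real.log (1 - δ)))
              (fFix l u ΔQ ε δ (ΔQ / (ε - Real.log (1 - δ)))) ∧
        fFix l u ΔQ ε δ bs = bs) ∧
    (∀ bs : ℝ,
        bs ∈ Set.Icc (ΔQ / (ε - Real.log (1 - δ)))
              (fFix l u ΔQ ε δ (ΔQ / (ε - Real.log (1 - δ)))) →
        fFix l u ΔQ ε δ bs = bs →
        ((bs = ΔQ / (ε - Real.log (1 - δ)) ∧
          bs = fFix l u ΔQ ε δ (ΔQ / (ε - Real.log (1 - δ)))) ↔ ΔQ = u - l)) := by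
  set K := ε - Real.log (1 - δ) with hKdef
  have hK : 0 < K := by
    have hlog : Real.log (1 - δ) ≤ 0 := Real.log_nonpos (by linarith) (by linarith)
    rcases lt_or_eq_of_le hε with hε' | hε'
    · rw [hKdef]; linarith
    · have hδ : 0 < δ := by
        rcases lt_or_eq_of_le hδ0 with h | h
        · exact h
        · exact absurd ⟨hε'.symm, h.symm⟩ hne
      have : Real.log (1 - δ) < 0 := Real.log_neg (by linarith) (by linarith)
      rw [hKdef]; linarith
  set q := u - l - ΔQ with hqdef
  have hq : 0 ≤ q := by rw [hqdef]; linarith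
  set b0 := ΔQ / K with hb0def
  have hb0 : 0 < b0 := div_pos hΔQ hK
  have hfix : ∀ b : ℝ, 0 < b →
      fFix l u ΔQ ε δ b = ΔQ / (K - Real.log (hAux ΔQ q (1/b))) := by
    intro b hb
    rw [fFix, deltaC_eq hlu hΔQ hΔQu hb, ← hqdef]
    congr 1
    rw [hKdef]; ring
  have ht0 : (0:ℝ) < 1/b0 := by positivity
  have hmono := hAux_monotoneOn (p := ΔQ) (q := q) hΔQ hq
  have hposH : ∀ t : ℝ, 0 < t → 0 < hAux ΔQ q t := fun t ht => hAux_pos hΔQ hq ht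
  have hlogge : ∀ b : ℝ, 0 < b → 0 ≤ Real.log (hAux ΔQ q (1/b)) := fun b hb =>
    Real.log_nonneg (hAux_ge_one hΔQ hq (by positivity))
  have hQb0 : ΔQ * (1/b0) = K := by
    rw [hb0def]; field_simp
  set L0 := Real.log (hAux ΔQ q (1/b0)) with hL0
  have hL0nonneg : 0 ≤ L0 := hlogge _ hb0
  have hlt : L0 < K := by
    have h1 := hAux_lt_exp hΔQ hq ht0
    have h2 := Real.log_lt_log (hposH _ ht0) h1
    rwa [Real.log_exp, hQb0] at h2
  set D0 := K - L0 with hD0def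
  have hD0pos : 0 < D0 := by rw [hD0def]; linarith
  set B := fFix l u ΔQ ε δ b0 with hBdef
  have hBeq : B = ΔQ / D0 := by rw [hBdef, hfix b0 hb0, ← hL0, ← hD0def]
  have hBpos : 0 < B := by rw [hBeq]; positivity
  have hb0B : b0 ≤ B := by
    rw [hBeq, hb0def]
    exact div_le_div_of_nonneg_left hΔQ.le hD0pos (by rw [hD0def]; linarith)
  set ψ : ℝ → ℝ := fun b => ΔQ * (1/b) + Real.log (hAux ΔQ q (1/b)) with hψdef
  have hψanti : ∀ x y : ℝ, 0 < x → x < y → ψ y < ψ x := by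
    intro x y hx hxy
    have hy : 0 < y := hx.trans hxy
    have h1 : 1/y < 1/x := one_div_lt_one_div_of_lt hx hxy
    have h2 : Real.log (hAux ΔQ q (1/y)) ≤ Real.log (hAux ΔQ q (1/x)) :=
      Real.log_le_log (hposH _ (by positivity))
        (hmono (Set.mem_Ioi.2 (by positivity)) (Set.mem_Ioi.2 (by positivity)) h1.le)
    have h3 : ΔQ * (1/y) < ΔQ * (1/x) := by nlinarith
    simp only [hψdef]
    linarith
  have hchar : ∀ b : ℝ, 0 < b → (fFix l u ΔQ ε δ b = b ↔ ψ b = K) := by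
    intro b hb
    rw [hfix b hb]
    constructor
    · intro h
      have hDb0 : K - Real.log (hAux ΔQ q (1/b)) ≠ 0 := by
        intro h0
        rw [h0, div_zero] at h
        exact absurd h.symm (ne_of_gt hb)
      have h2 : ΔQ = b * (K - Real.log (hAux ΔQ q (1/b))) := (div_eq_iff hDb0).1 h
      have h3 : ΔQ * (1/b) = K - Real.log (hAux ΔQ q (1/b)) := by
        rw [mul_one_div, div_eq_iff (ne_of_gt hb)]
        linear_combination h2
      simp only [hψdef]
      linarith [h3]
    · intro h
      simp only [hψdef] at h
      have h3 : K - Real.log (hAux ΔQ q (1/b)) = ΔQ / b := by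
        rw [← mul_one_div ΔQ b]; linarith
      rw [h3]
      field_simp
  have hcontH : ContinuousOn (fun t : ℝ => hAux ΔQ q t) (Set.Ioi 0) := fun t ht =>
    (hAux_hasDerivAt hΔQ hq ht).continuousAt.continuousWithinAt
  have hinvcont : ContinuousOn (fun b : ℝ => 1/b) (Set.Icc b0 B) := by
    apply ContinuousOn.div continuousOn_const continuousOn_id
    intro x hx
    exact ne_of_gt (lt_of_lt_of_le hb0 hx.1)
  have hmaps : Set.MapsTo (fun b : ℝ => 1/b) (Set.Icc b0 B) (Set.Ioi 0) := by
    intro x hx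
    have : 0 < x := lt_of_lt_of_le hb0 hx.1
    exact Set.mem_Ioi.2 (by positivity)
  have hcont : ContinuousOn ψ (Set.Icc b0 B) := by
    apply ContinuousOn.add
    · apply ContinuousOn.mul continuousOn_const hinvcont
    · apply ContinuousOn.log (hcontH.comp hinvcont hmaps)
      intro x hx
      have hxpos : 0 < x := lt_of_lt_of_le hb0 hx.1
      exact ne_of_gt (hposH _ (by positivity))
  have hψb0 : ψ b0 = K + L0 := by simp only [hψdef]; rw [hQb0, ← hL0]
  have hψB : ψ B ≤ K := by
    have h1B : 1/B ≤ 1/b0 := one_div_le_one_div_of_le hb0 hb0B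
    have hlB : Real.log (hAux ΔQ q (1/B)) ≤ L0 := by
      rw [hL0]
      exact Real.log_le_log (hposH _ (by positivity))
        (hmono (Set.mem_Ioi.2 (by positivity)) (Set.mem_Ioi.2 ht0) h1B)
    have hQB : ΔQ * (1/B) = D0 := by
      rw [hBeq]; field_simp
    simp only [hψdef]
    rw [hQB, hD0def]
    linarith
  have hKmem : K ∈ Set.Icc (ψ B) (ψ b0) := ⟨hψB, by rw [hψb0]; linarith⟩
  obtain ⟨bs, hbsmem, hbsK⟩ := intermediate_value_Icc' hb0B hcont hKmem
  have hbspos : 0 < bs := lt_of_lt_of_le hb0 hbsmem.1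
  constructor
  · refine ⟨bs, ⟨hbsmem, (hchar bs hbspos).2 hbsK⟩, ?_⟩
    rintro y ⟨hymem, hyfix⟩
    have hypos : 0 < y := lt_of_lt_of_le hb0 hymem.1
    have hyK : ψ y = K := (hchar y hypos).1 hyfix
    rcases lt_trichotomy y bs with h | h | h
    · have := hψanti y bs hypos h
      rw [hyK, hbsK] at this
      exact absurd this (lt_irrefl K)
    · exact h
    · have := hψanti bs y hbspos h
      rw [hyK, hbsK] at this
      exact absurd this (lt_irrefl K)
  · intro bs' hmem hfixbs
    constructor
    · rintro ⟨h1, h2⟩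
      have hEq : b0 = B := by rw [← h1, h2]
      have hKD0 : K = D0 := by
        rw [hb0def, hBeq] at hEq
        rw [div_eq_div_iff (ne_of_gt hK) (ne_of_gt hD0pos)] at hEq
        exact (mul_left_cancel₀ (ne_of_gt hΔQ) hEq).symm
      have hL00 : L0 = 0 := by rw [hD0def] at hKD0; linarith
      by_contra hQne
      have hqpos : 0 < q := by
        rcases lt_or_eq_of_le hq with h | h
        · exact h
        · exact absurd (by rw [hqdef] at h; linarith) hQne
      have := hAux_gt_one hΔQ hqpos ht0
      have hlpos : 0 < L0 := by rw [hL0]; exact Real.log_pos this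
      linarith
    · intro hQ
      have hq0 : q = 0 := by rw [hqdef]; linarith
      have hone : hAux ΔQ q (1/b0) = 1 := by rw [hq0]; exact hAux_eq_one hΔQ ht0
      have hL00 : L0 = 0 := by rw [hL0, hone, Real.log_one]
      have hBb0 : B = b0 := by
        rw [hBeq, hb0def, hD0def, hL00, sub_zero]
      obtain ⟨hlb, hrb⟩ := hmem
      rw [hBb0] at hrb
      have : bs' = b0 := le_antisymm hrb hlb
      exact ⟨this, by rw [this, ← hBb0]⟩
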